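/- Let Φ ∈ ℝ^{n×n} be a real circulant matrix with first column φ, let m ≥ 1, let W = diag(w) where w_k = w(|λ_k|) for a function w : ℝ → ℝ_{>0} and λ_k the eigenvalues of Φ, and let R ∈ ℝ^{ν×n} be a real restriction (selection) matrix. If the normal-equations matrix R F* W F Rᵀ is invertible, then the minimizer ψ ∈ ℂ^ν of ‖W^{1/2} F (φ^{(m)} − Rᵀ ψ)‖₂², where φ^{(m)} is the first column of Φ^m, is real valued. -/

import Mathlib

open scoped Matrix
open Complex

private lemma aux_quad (S Q : ℝ) (h : ∀ t : ℝ, 0 ≤ t^2 * Q - 2*t*S) : S = 0 := by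
  by_contra hS
  set M : ℝ := max Q 1 with hM
  have hM0 : 0 < M := lt_of_lt_of_le one_pos (le_max_right _ _)
  have hQM : Q ≤ M := le_max_left _ _
  have ht := h (S / M)
  have hS2 : 0 < S^2 := by positivity
  rw [div_pow] at ht
  have key : 0 ≤ S^2 * Q - 2 * S^2 * M := by
    have h2 : 0 ≤ (S^2 / M^2 * Q - 2 * (S/M) * S) * M^2 := by positivity
    have hMne : M ≠ 0 := ne_of_gt hM0
    calc (0:ℝ) ≤ (S^2 / M^2 * Q - 2 * (S/M) * S) * M^2 := h2
    _ = S^2 * Q - 2 * S^2 * M := by field_simp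
  nlinarith [mul_le_mul_of_nonneg_left hQM (le_of_lt hS2)]

private lemma key_exp (n : ℕ) [NeZero n] (a : ℕ) (k : Fin n) :
    Complex.exp (2*(Real.pi:ℂ)*Complex.I*(a:ℂ)*(((-k : Fin n).val : ℂ))/n)
      = Complex.exp (-(2*(Real.pi:ℂ)*Complex.I*(a:ℂ)*(k.val:ℂ))/n) := by
  have hn : 0 < n := Nat.pos_of_ne_zero (NeZero.ne n)
  by_cases hk : k = 0
  · subst hk; simp
  · have hkv : 0 < k.val := by
      rcases Nat.eq_zero_or_pos k.val with h | h
      · exact absurd (Fin.ext (by simp [h])) hk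
      · exact h
    have hv : ((-k : Fin n).val) = n - k.val := by
      rw [Fin.neg_def]
      simp [Nat.mod_eq_of_lt (by omega : n - k.val < n)]
    rw [hv]
    have hne : (n:ℂ) ≠ 0 := Nat.cast_ne_zero.mpr hn.ne'
    have hcast : ((n - k.val : ℕ) : ℂ) = (n:ℂ) - (k.val:ℂ) := by
      push_cast [Nat.cast_sub (le_of_lt k.isLt)]; ring
    rw [hcast]
    have hsplit : (2*(Real.pi:ℂ)*Complex.I*(a:ℂ)*((n:ℂ) - (k.val:ℂ)))/n
        = (a:ℂ)*(2*(Real.pi:ℂ)*Complex.I) + (-(2*(Real.pi:ℂ)*Complex.I*(a:ℂ)*(k.val:ℂ))/n) := by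
      field_simp
      ring
    rw [hsplit, Complex.exp_add]
    have h1 : Complex.exp ((a:ℂ)*(2*(Real.pi:ℂ)*Complex.I)) = 1 := by
      have := Complex.exp_int_mul_two_pi_mul_I (a:ℤ)
      push_cast at this
      exact this
    rw [h1, one_mul]

/-- inverse variant: `exp(-(2πi·a·(-k))/n) = exp((2πi·a·k)/n)` -/
private lemma key_exp_neg (n : ℕ) [NeZero n] (a : ℕ) (k : Fin n) :
    Complex.exp (-(2*(Real.pi:ℂ)*Complex.I*(a:ℂ)*(((-k : Fin n).val : ℂ)))/n)
      = Complex.exp ((2*(Real.pi:ℂ)*Complex.I*(a:ℂ)*(k.val:ℂ))/n) := by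
  have h := congrArg (·⁻¹) (key_exp n a k)
  simp only [← Complex.exp_neg] at h
  rw [show -(2*(Real.pi:ℂ)*Complex.I*(a:ℂ)*(((-k : Fin n).val : ℂ))/n)
      = -(2*(Real.pi:ℂ)*Complex.I*(a:ℂ)*(((-k : Fin n).val : ℂ)))/n by ring,
    show -(-(2*(Real.pi:ℂ)*Complex.I*(a:ℂ)*(k.val:ℂ))/n)
      = (2*(Real.pi:ℂ)*Complex.I*(a:ℂ)*(k.val:ℂ))/n by ring] at h
  exact h

/-- The minimizer of the weighted least-squares problem for the coarse-grid
operator is real valued. -/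
theorem weighted_lsq_minimizer_real (n ν : ℕ) (hn : 0 < n) (φ : Fin n → ℝ)
    (m : ℕ) (hm : 1 ≤ m)
    (Φ : Matrix (Fin n) (Fin n) ℂ)
    (hΦ : Φ = Matrix.circulant (fun j => (φ j : ℂ)))
    (F : Matrix (Fin n) (Fin n) ℂ)
    (hF : ∀ j k : Fin n, F j k =
      Complex.exp (-(2 * Real.pi * Complex.I * (j.val : ℂ) * (k.val : ℂ)) / n))
    (lam : Fin n → ℂ)
    (hlam : ∀ k : Fin n, lam k = ∑ j : Fin n, (φ j : ℂ) *
      Complex.exp (-(2 * Real.pi * Complex.I * (j.val : ℂ) * (k.val : ℂ)) / n))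
    (wfun : ℝ → ℝ) (hwfun : ∀ x, 0 < wfun x)
    (w : Fin n → ℝ) (hw : ∀ k, w k = wfun ‖lam k‖)
    (R : Matrix (Fin ν) (Fin n) ℝ)
    (Rc : Matrix (Fin ν) (Fin n) ℂ) (hR : Rc = R.map Complex.ofReal)
    (φm : Fin n → ℂ) (hφm : ∀ j, φm j = (Φ ^ m) j ⟨0, hn⟩)
    (hinv : IsUnit (Rc * Fᴴ * Matrix.diagonal (fun k => (w k : ℂ)) * F * Rcᵀ))
    (obj : (Fin ν → ℂ) → ℝ)
    (hobj : ∀ ψ, obj ψ =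
      ∑ k : Fin n, w k * ‖F.mulVec (φm - Rcᵀ.mulVec ψ) k‖ ^ 2)
    (ψ : Fin ν → ℂ) (hmin : ∀ χ, obj ψ ≤ obj χ) :
    ∀ i, (ψ i).im = 0 := by
  haveI : NeZero n := ⟨hn.ne'⟩
  set W : Matrix (Fin n) (Fin n) ℂ := Matrix.diagonal (fun k => (w k : ℂ)) with hW
  set A : Matrix (Fin n) (Fin ν) ℂ := F * Rcᵀ with hA
  set b : Fin n → ℂ := F.mulVec φm with hb
  set u : Fin n → ℂ := b - A.mulVec ψ with hu
  set c : Fin ν → ℂ := (Aᴴ * W).mulVec u with hc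
  -- conjugates of F entries
  have hFconj : ∀ j k : Fin n, (starRingEnd ℂ) (F j k)
      = Complex.exp ((2 * Real.pi * Complex.I * (j.val : ℂ) * (k.val : ℂ)) / n) := by
    intro j k
    rw [hF, ← Complex.exp_conj]
    congr 1
    simp [map_div₀, map_ofNat]
  -- lam symmetry and w symmetry
  have hlamneg : ∀ k : Fin n, lam (-k) = (starRingEnd ℂ) (lam k) := by
    intro k
    rw [hlam, hlam, map_sum]
    refine Finset.sum_congr rfl (fun j _ => ?_)
    rw [map_mul, Complex.conj_ofReal, ← Complex.exp_conj]
    rw [key_exp_neg n j.val k]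
    congr 2
    simp [map_div₀, map_ofNat]
  have hwneg : ∀ k : Fin n, w (-k) = w k := by
    intro k
    rw [hw, hw, hlamneg, Complex.norm_conj]
  -- P = Fᴴ W F is a real matrix
  set P : Matrix (Fin n) (Fin n) ℂ := Fᴴ * W * F with hPdef
  have hP : ∀ j l, P j l = ∑ k : Fin n, (starRingEnd ℂ) (F k j) * (w k : ℂ) * F k l := by
    intro j l
    rw [hPdef, Matrix.mul_apply]
    refine Finset.sum_congr rfl (fun k _ => ?_)
    rw [hW, Matrix.mul_diagonal, Matrix.conjTranspose_apply]
    rfl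
  have hPreal : ∀ j l, (starRingEnd ℂ) (P j l) = P j l := by
    intro j l
    rw [hP, map_sum]
    rw [show (∑ k : Fin n, (starRingEnd ℂ) ((starRingEnd ℂ) (F k j) * (w k : ℂ) * F k l))
        = ∑ k : Fin n, F k j * (w k : ℂ) * (starRingEnd ℂ) (F k l) by
      refine Finset.sum_congr rfl (fun k _ => ?_)
      rw [map_mul, map_mul, Complex.conj_conj, Complex.conj_ofReal]]
    refine Fintype.sum_equiv (Equiv.neg (Fin n)) _ _ (fun k => ?_)
    simp only [Equiv.neg_apply]
    have t1 : (starRingEnd ℂ) (F (-k) j) = F k j := by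
      rw [hFconj, hF]
      rw [show 2 * (Real.pi:ℂ) * Complex.I * (((-k : Fin n).val : ℕ) : ℂ) * (j.val : ℂ)
          = 2 * (Real.pi:ℂ) * Complex.I * (j.val : ℂ) * (((-k : Fin n).val : ℕ) : ℂ) by ring]
      rw [key_exp n j.val k]
      congr 1
      ring
    have t3 : F (-k) l = (starRingEnd ℂ) (F k l) := by
      rw [hFconj, hF]
      rw [show -(2 * (Real.pi:ℂ) * Complex.I * (((-k : Fin n).val : ℕ) : ℂ) * (l.val : ℂ))
          = -(2 * (Real.pi:ℂ) * Complex.I * (l.val : ℂ) * (((-k : Fin n).val : ℕ) : ℂ)) by ring]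
      rw [key_exp_neg n l.val k]
      congr 1
      ring
    rw [← t1, ← t3, hwneg]
  -- φm is real
  have hφmreal : ∀ j, (starRingEnd ℂ) (φm j) = φm j := by
    intro j
    have hmap : Φ = (Complex.ofRealHom.mapMatrix) (Matrix.circulant φ) := by
      rw [hΦ, RingHom.mapMatrix_apply]
      ext i j
      simp [Matrix.circulant_apply, Matrix.map_apply]
    have hpow : Φ ^ m = ((Matrix.circulant φ) ^ m).map Complex.ofRealHom := by
      rw [hmap, ← map_pow, RingHom.mapMatrix_apply]
    rw [hφm, hpow]
    simp [Matrix.map_apply, Complex.conj_ofReal]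
  -- objective rewritten via normSq
  have hres : ∀ χ, F.mulVec (φm - Rcᵀ.mulVec χ) = b - A.mulVec χ := by
    intro χ
    rw [Matrix.mulVec_sub, Matrix.mulVec_mulVec, hb, hA]
  have hobj' : ∀ χ, obj χ = ∑ k : Fin n, w k * Complex.normSq ((b - A.mulVec χ) k) := by
    intro χ
    rw [hobj]
    refine Finset.sum_congr rfl (fun k _ => ?_)
    rw [hres, Complex.sq_norm]
  -- quadratic expansion
  have hexp : ∀ (d : Fin ν → ℂ) (t : ℝ), obj (ψ + (t:ℂ) • d)
      = obj ψ - 2*t*(∑ k : Fin n, w k * ((u k) * (starRingEnd ℂ) ((A.mulVec d) k)).re)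
        + t^2 * (∑ k : Fin n, w k * Complex.normSq ((A.mulVec d) k)) := by
    intro d t
    rw [hobj' (ψ + (t:ℂ) • d), hobj' ψ]
    have hpt : ∀ k, (b - A.mulVec (ψ + (t:ℂ) • d)) k
        = u k - (t:ℂ) * (A.mulVec d) k := by
      intro k
      simp [Matrix.mulVec_add, Matrix.mulVec_smul, hu]
      ring
    calc (∑ k : Fin n, w k * Complex.normSq ((b - A.mulVec (ψ + (t:ℂ) • d)) k))
        = ∑ k : Fin n, (w k * Complex.normSq (u k)
            - 2*t*(w k * ((u k) * (starRingEnd ℂ) ((A.mulVec d) k)).re)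
            + t^2 * (w k * Complex.normSq ((A.mulVec d) k))) := by
          refine Finset.sum_congr rfl (fun k _ => ?_)
          rw [hpt k]
          have hns : ∀ (z v : ℂ), Complex.normSq (z - (t:ℂ) * v)
              = Complex.normSq z - 2*t*(z * (starRingEnd ℂ) v).re + t^2 * Complex.normSq v := by
            intro z v
            simp only [Complex.normSq_apply, Complex.sub_re, Complex.sub_im, Complex.mul_re,
              Complex.mul_im, Complex.ofReal_re, Complex.ofReal_im, Complex.conj_re,
              Complex.conj_im]
            ring
          rw [hns]
          ring
      _ = _ := by
          rw [Finset.sum_add_distrib, Finset.sum_sub_distrib, ← Finset.mul_sum, ← Finset.mul_sum]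
  -- first-order condition
  have hgrad : ∀ d : Fin ν → ℂ,
      (∑ k : Fin n, w k * ((u k) * (starRingEnd ℂ) ((A.mulVec d) k)).re) = 0 := by
    intro d
    refine aux_quad _ (∑ k : Fin n, w k * Complex.normSq ((A.mulVec d) k)) (fun t => ?_)
    have := hmin (ψ + (t:ℂ) • d)
    rw [hexp d t] at this
    linarith
  -- entrywise formula for c
  have hcent : ∀ i, c i = ∑ k : Fin n, (starRingEnd ℂ) (A k i) * (w k : ℂ) * u k := by
    intro i
    simp [hc, Matrix.mulVec, dotProduct, Matrix.mul_diagonal, Matrix.conjTranspose_apply, hW]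
  -- c = 0
  have hc0 : ∀ i, c i = 0 := by
    have hSc := hgrad c
    have hkey : (∑ k : Fin n, w k * ((u k) * (starRingEnd ℂ) ((A.mulVec c) k)).re)
        = ∑ i : Fin ν, Complex.normSq (c i) := by
      have h1 : (∑ k : Fin n, w k * ((u k) * (starRingEnd ℂ) ((A.mulVec c) k)).re)
          = (∑ k : Fin n, (w k : ℂ) * ((u k) * (starRingEnd ℂ) ((A.mulVec c) k))).re := by
        rw [Complex.re_sum]
        exact Finset.sum_congr rfl (fun k _ => (Complex.re_ofReal_mul _ _).symm)
      rw [h1]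
      have h2 : (∑ k : Fin n, (w k : ℂ) * ((u k) * (starRingEnd ℂ) ((A.mulVec c) k)))
          = ∑ i : Fin ν, ((starRingEnd ℂ) (c i)) * c i := by
        calc (∑ k : Fin n, (w k : ℂ) * ((u k) * (starRingEnd ℂ) ((A.mulVec c) k)))
            = ∑ k : Fin n, ∑ i : Fin ν,
                ((starRingEnd ℂ) (c i)) * ((starRingEnd ℂ) (A k i) * (w k : ℂ) * u k) := by
              refine Finset.sum_congr rfl (fun k _ => ?_)
              rw [show (A.mulVec c) k = ∑ i : Fin ν, A k i * c i by
                simp [Matrix.mulVec, dotProduct]]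
              rw [map_sum, Finset.mul_sum, Finset.mul_sum]
              refine Finset.sum_congr rfl (fun i _ => ?_)
              rw [map_mul]
              ring
          _ = ∑ i : Fin ν, ((starRingEnd ℂ) (c i)) * c i := by
              rw [Finset.sum_comm]
              refine Finset.sum_congr rfl (fun i _ => ?_)
              rw [← Finset.mul_sum, hcent i]
      rw [h2, Complex.re_sum]
      refine Finset.sum_congr rfl (fun i _ => ?_)
      rw [show ((starRingEnd ℂ) (c i)) * c i = c i * (starRingEnd ℂ) (c i) by ring,
        Complex.mul_conj]
      simp
    rw [hkey] at hSc
    intro i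
    have := (Finset.sum_eq_zero_iff_of_nonneg
      (fun i _ => Complex.normSq_nonneg (c i))).mp hSc i (Finset.mem_univ i)
    exact Complex.normSq_eq_zero.mp this
  -- normal equations
  set Mn : Matrix (Fin ν) (Fin ν) ℂ := Rc * Fᴴ * W * F * Rcᵀ with hMn
  have hAH : Aᴴ = Rc * Fᴴ := by
    rw [hA, Matrix.conjTranspose_mul]
    congr 1
    ext i j
    simp [Matrix.conjTranspose_apply, Matrix.transpose_apply, hR, Matrix.map_apply,
      Complex.conj_ofReal]
  have hnormal : Mn.mulVec ψ = (Rc * Fᴴ * W * F).mulVec φm := by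
    have h0 : (Aᴴ * W).mulVec u = 0 := funext hc0
    rw [hu, Matrix.mulVec_sub, sub_eq_zero, hb, Matrix.mulVec_mulVec,
      Matrix.mulVec_mulVec] at h0
    have e1 : Aᴴ * W * A = Mn := by
      rw [hAH, hA, hMn]; simp only [Matrix.mul_assoc]
    have e2 : Aᴴ * W * F = Rc * Fᴴ * W * F := by rw [hAH]
    rw [← e1, ← e2]
    exact h0.symm
  -- reality of the normal matrix and right-hand side
  have hRcreal : ∀ i j, (starRingEnd ℂ) (Rc i j) = Rc i j := by
    intro i j; rw [hR]; simp [Matrix.map_apply, Complex.conj_ofReal]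
  have hRPreal : ∀ i l, (starRingEnd ℂ) ((Rc * P) i l) = (Rc * P) i l := by
    intro i l
    rw [Matrix.mul_apply, map_sum]
    refine Finset.sum_congr rfl (fun k _ => ?_)
    rw [map_mul, hRcreal, hPreal]
  have hMP : Mn = Rc * P * Rcᵀ := by
    rw [hMn, hPdef]; simp only [Matrix.mul_assoc]
  have hMreal : ∀ i j, (starRingEnd ℂ) (Mn i j) = Mn i j := by
    intro i j
    rw [hMP, Matrix.mul_apply, map_sum]
    refine Finset.sum_congr rfl (fun l _ => ?_)
    rw [map_mul, hRPreal, Matrix.transpose_apply, hRcreal]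
  have hRPF : Rc * Fᴴ * W * F = Rc * P := by
    rw [hPdef]; simp only [Matrix.mul_assoc]
  have hgreal : ∀ i, (starRingEnd ℂ) (((Rc * Fᴴ * W * F).mulVec φm) i)
      = ((Rc * Fᴴ * W * F).mulVec φm) i := by
    intro i
    rw [hRPF]
    simp only [Matrix.mulVec, dotProduct, map_sum]
    refine Finset.sum_congr rfl (fun j _ => ?_)
    rw [map_mul, hRPreal, hφmreal]
  -- conjugate satisfies the same equation
  have hconjeq : Mn.mulVec (fun i => (starRingEnd ℂ) (ψ i)) = Mn.mulVec ψ := by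
    funext i
    have h1 : Mn.mulVec (fun i => (starRingEnd ℂ) (ψ i)) i
        = (starRingEnd ℂ) (Mn.mulVec ψ i) := by
      simp only [Matrix.mulVec, dotProduct, map_sum]
      refine Finset.sum_congr rfl (fun j _ => ?_)
      rw [map_mul, hMreal]
    rw [h1]
    have h2 := congrFun hnormal i
    rw [h2, hgreal, ← h2]
  -- invertibility forces ψ to equal its conjugate
  have hdet := (Matrix.isUnit_iff_isUnit_det Mn).mp hinv
  have hMinv : Mn⁻¹ * Mn = 1 := Matrix.nonsing_inv_mul Mn hdet
  have hpsieq : (fun i => (starRingEnd ℂ) (ψ i)) = ψ := by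
    have h3 := congrArg (Mn⁻¹.mulVec) hconjeq
    rwa [Matrix.mulVec_mulVec, Matrix.mulVec_mulVec, hMinv, Matrix.one_mulVec,
      Matrix.one_mulVec] at h3
  intro i
  exact Complex.conj_eq_iff_im.mp (congrFun hpsieq i)
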